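/- Let S = S₁ be the blowup of ℙ² at one point, with h the pullback of the hyperplane class and e₁ the exceptional divisor. For β = ah − de₁ with a > d > 0, the codimension of the locus of non-integral curves in |β| equals min{a − d, d + 1}. -/
import Mathlib


/-- On the blowup S₁ of ℙ² at a point (Pic = ℤh ⊕ ℤe₁, K = −3h+e₁),
for β = a·h − d·e₁ with a > d > 0, the codimension of the non-integral locus in |β|
equals min{a−d, d+1}. A class b·h − c·e₁ is effective iff 0 ≤ b and c ≤ b, and the
dimension of its linear system is (b(b+3) − c(c+1))/2 if c ≥ 0, and b(b+3)/2
otherwise (fixed part a multiple of e₁). The non-integral locus is the union of the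
images of |β₁| × |β₂| over nontrivial effective decompositions β = β₁ + β₂, so its
codimension is dim|β| minus the supremum of dim|β₁| + dim|β₂|. -/
theorem stmt13 (a d : ℤ) (hd : 0 < d) (had : d < a)
    (eff : ℤ × ℤ → Prop) (heff : ∀ b : ℤ × ℤ, eff b ↔ 0 ≤ b.1 ∧ b.2 ≤ b.1)
    (dimLS : ℤ × ℤ → ℤ)
    (hdim : ∀ b : ℤ × ℤ, dimLS b =
      if 0 ≤ b.2 then (b.1 * (b.1 + 3) - b.2 * (b.2 + 1)) / 2
      else b.1 * (b.1 + 3) / 2) :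
    dimLS (a, d) -
      sSup {x : ℤ | ∃ β₁ β₂ : ℤ × ℤ, eff β₁ ∧ eff β₂ ∧ β₁ ≠ 0 ∧ β₂ ≠ 0 ∧
        β₁ + β₂ = (a, d) ∧ x = dimLS β₁ + dimLS β₂} = min (a - d) (d + 1) := by
  have key2 : ∀ b c : ℤ, 2 * dimLS (b, c) =
      if 0 ≤ c then b * (b + 3) - c * (c + 1) else b * (b + 3) := by
    intro b c
    rw [hdim]
    obtain ⟨r, hr⟩ : Even (b * (b + 3)) := by
      obtain ⟨r, hr⟩ := Int.even_mul_succ_self b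
      exact ⟨r + b, by nlinarith⟩
    obtain ⟨s, hs⟩ : Even (c * (c + 1)) := Int.even_mul_succ_self c
    simp only
    split <;> omega
  set M : ℤ := dimLS (a, d) - min (a - d) (d + 1) with hM
  set S : Set ℤ := {x : ℤ | ∃ β₁ β₂ : ℤ × ℤ, eff β₁ ∧ eff β₂ ∧ β₁ ≠ 0 ∧ β₂ ≠ 0 ∧
        β₁ + β₂ = (a, d) ∧ x = dimLS β₁ + dimLS β₂} with hS
  have hF : 2 * dimLS (a, d) = a * (a + 3) - d * (d + 1) := by
    rw [key2, if_pos (by omega)]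
  have hmin1 : min (a - d) (d + 1) ≤ a - d := min_le_left _ _
  have hmin2 : min (a - d) (d + 1) ≤ d + 1 := min_le_right _ _
  have bound : ∀ x ∈ S, x ≤ M := by
    rintro x ⟨⟨b, c⟩, ⟨b', c'⟩, e1, e2, n1, n2, hsum, hx⟩
    rw [heff] at e1 e2
    simp only at e1 e2
    obtain ⟨h1a, h1b⟩ := e1
    obtain ⟨h2a, h2b⟩ := e2
    have hb' : b + b' = a ∧ c + c' = d := by
      constructor
      · have := congrArg Prod.fst hsum; simpa using this
      · have := congrArg Prod.snd hsum; simpa using this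
    obtain ⟨hba, hcd⟩ := hb'
    have hb'' : b' = a - b := by omega
    have hc'' : c' = d - c := by omega
    subst hb'' hc''
    have n1' : ¬(b = 0 ∧ c = 0) := by
      intro ⟨u1, u2⟩; exact n1 (by simp [Prod.ext_iff, u1, u2])
    have n2' : ¬(b = a ∧ c = d) := by
      intro ⟨u1, u2⟩; exact n2 (by simp [Prod.ext_iff]; omega)
    have h1 := key2 b c
    have h2 := key2 (a - b) (d - c)
    suffices h : 2 * x ≤ 2 * M by omega
    rw [hx, hM]
    by_cases hc : 0 ≤ c
    · by_cases hc2 : 0 ≤ d - c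
      · rw [if_pos hc] at h1; rw [if_pos hc2] at h2
        have hb1 : 1 ≤ b := by omega
        have hb2 : b ≤ a - 1 := by omega
        -- need: b*(a-b) - c*(d-c) ≥ min (a-d) (d+1)
        by_cases hu : b = c
        · -- g = c*(a-d), c = b ≥ 1
          subst hu
          nlinarith [mul_nonneg (show (0:ℤ) ≤ b - 1 by omega) (show (0:ℤ) ≤ a - d by omega)]
        · by_cases hv : a - b = d - c
          · -- g = (d-c)*(a-d), d-c = a-b ≥ 1
            nlinarith [mul_nonneg (show (0:ℤ) ≤ (d - c) - 1 by omega)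
              (show (0:ℤ) ≤ a - d by omega)]
          · -- u = b-c ≥ 1, v = (a-b)-(d-c) ≥ 1
            have hu1 : 1 ≤ b - c := by omega
            have hv1 : 1 ≤ (a - b) - (d - c) := by omega
            nlinarith [mul_nonneg hc (show (0:ℤ) ≤ (a - b) - (d - c) - 1 by omega),
              mul_nonneg hc2 (show (0:ℤ) ≤ b - c - 1 by omega),
              mul_nonneg (show (0:ℤ) ≤ b - c - 1 by omega)
                (show (0:ℤ) ≤ (a - b) - (d - c) - 1 by omega)]
      · -- c > d, so β₂ has negative e₁-coefficient
        rw [if_pos hc] at h1; rw [if_neg hc2] at h2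
        have he : 1 ≤ c - d := by omega
        have hb1 : 1 ≤ b := by omega
        nlinarith [mul_nonneg (show (0:ℤ) ≤ b by omega) (show (0:ℤ) ≤ a - b by omega),
          mul_nonneg (show (0:ℤ) ≤ c - d - 1 by omega) (show (0:ℤ) ≤ d by omega),
          mul_nonneg (show (0:ℤ) ≤ c - d - 1 by omega) (show (0:ℤ) ≤ c - d + 2 by omega)]
    · -- c < 0
      have hc2 : 0 ≤ d - c := by omega
      rw [if_neg hc] at h1; rw [if_pos hc2] at h2
      nlinarith [mul_nonneg (show (0:ℤ) ≤ b by omega) (show (0:ℤ) ≤ a - b by omega),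
        mul_nonneg (show (0:ℤ) ≤ -c - 1 by omega) (show (0:ℤ) ≤ d by omega),
        mul_nonneg (show (0:ℤ) ≤ -c - 1 by omega) (show (0:ℤ) ≤ -c + 2 by omega)]
  have mem : M ∈ S := by
    rcases min_cases (a - d) (d + 1) with ⟨he, he'⟩ | ⟨he, he'⟩
    · -- min = a - d : split off a line through the point, β₁ = (1,1)
      refine ⟨(1, 1), (a - 1, d - 1), ?_, ?_, ?_, ?_, ?_, ?_⟩
      · rw [heff]; constructor <;> norm_num
      · rw [heff]; constructor <;> · simp only; omega
      · simp [Prod.ext_iff] <;> omega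
      · simp [Prod.ext_iff] <;> omega
      · simp [Prod.ext_iff] <;> omega
      · have h1 := key2 1 1
        have h2 := key2 (a - 1) (d - 1)
        rw [if_pos (by norm_num)] at h1
        rw [if_pos (by omega)] at h2
        rw [hM, he]
        suffices h : 2 * (dimLS (a, d) - (a - d)) =
            2 * (dimLS (1, 1) + dimLS (a - 1, d - 1)) by omega
        linear_combination hF - h1 - h2
    · -- min = d + 1 : split off the exceptional curve, β₁ = (0,-1)
      refine ⟨(0, -1), (a, d + 1), ?_, ?_, ?_, ?_, ?_, ?_⟩
      · rw [heff]; constructor <;> norm_num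
      · rw [heff]; constructor <;> · simp only; omega
      · simp [Prod.ext_iff] <;> omega
      · simp [Prod.ext_iff] <;> omega
      · simp [Prod.ext_iff] <;> omega
      · have h1 := key2 0 (-1)
        have h2 := key2 a (d + 1)
        rw [if_neg (by norm_num)] at h1
        rw [if_pos (by omega)] at h2
        rw [hM, he]
        suffices h : 2 * (dimLS (a, d) - (d + 1)) =
            2 * (dimLS (0, -1) + dimLS (a, d + 1)) by omega
        linear_combination hF - h1 - h2
  have hsup : sSup S = M :=
    le_antisymm (csSup_le ⟨M, mem⟩ bound) (le_csSup ⟨M, bound⟩ mem)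
  rw [hsup, hM]
  ring
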